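/- Let f ∈ ℝ[x,y] have at most t nonzero terms and set g(x) = f(x, x+1), assumed nonzero. Then the number of roots of g in the open interval (0, ∞), counted with multiplicity, is at most 2t - 2. -/

import Mathlib

open Polynomial

/-- Number of sign changes in the coefficient sequence, disregarding zeros. -/
noncomputable def signVar (p : Polynomial ℝ) : ℕ :=
  let l := (((List.range (p.natDegree + 1)).map fun i => p.coeff i).filter fun a => a ≠ 0)
  (l.zip l.tail).countP fun q => q.1 * q.2 < 0

/-- Substitution y = x + 1 into a bivariate polynomial. -/
noncomputable def subXX1 (f : MvPolynomial (Fin 2) ℝ) : Polynomial ℝ :=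
  MvPolynomial.aeval ![Polynomial.X, Polynomial.X + 1] f

/-- `T3 d h = (x+1)^d * h(-x/(x+1))` as a polynomial. -/
noncomputable def T3 (d : ℕ) (h : Polynomial ℝ) : Polynomial ℝ :=
  ∑ i ∈ Finset.range (d + 1),
    Polynomial.C (h.coeff i) * (-Polynomial.X) ^ i * (Polynomial.X + 1) ^ (d - i)

noncomputable def VI1 (h : Polynomial ℝ) : ℕ := signVar h
noncomputable def VI2 (h : Polynomial ℝ) : ℕ := signVar (h.comp (-1 - Polynomial.X))
noncomputable def VI3 (h : Polynomial ℝ) : ℕ := signVar (T3 h.natDegree h)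



/-- recursive sign-change count for a list -/
noncomputable def Vz : List ℝ → ℕ
  | [] => 0
  | a :: l =>
    (match l with
     | [] => 0
     | b :: _ => if a * b < 0 then 1 else 0) + Vz l

@[simp] lemma Vz_nil : Vz [] = 0 := rfl
@[simp] lemma Vz_single (a : ℝ) : Vz [a] = 0 := rfl
@[simp] lemma Vz_cons₂ (a b : ℝ) (l : List ℝ) :
    Vz (a :: b :: l) = (if a * b < 0 then 1 else 0) + Vz (b :: l) := rfl

lemma vz_zip : ∀ l : List ℝ, ((l.zip l.tail).countP fun q => decide (q.1 * q.2 < 0)) = Vz l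
  | [] => rfl
  | [_] => rfl
  | a :: b :: l => by
    rw [Vz_cons₂, ← vz_zip (b :: l)]
    simp only [List.tail_cons, List.zip_cons_cons, List.countP_cons]
    rcases lt_or_ge (a*b) 0 with h | h
    · simp [h, Nat.add_comm]
    · simp [not_lt.2 h]

lemma Vz_cons_le (a : ℝ) (l : List ℝ) : Vz l ≤ Vz (a :: l) := by
  cases l with
  | nil => simp
  | cons b l => rw [Vz_cons₂]; omega

lemma Vz_cons_cons_le (a d : ℝ) (l : List ℝ) (hd : d ≠ 0) (hh : ∀ x ∈ l, x ≠ 0) :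
    Vz (a :: l) ≤ Vz (a :: d :: l) := by
  cases l with
  | nil => simp
  | cons h l =>
    have hh0 : h ≠ 0 := hh h (by simp)
    rw [Vz_cons₂, Vz_cons₂, Vz_cons₂]
    have : (if a * h < 0 then 1 else 0) ≤
        (if a * d < 0 then 1 else 0) + (if d * h < 0 then 1 else 0) := by
      split_ifs with h1 h2 h3 <;> try omega
      exfalso
      nlinarith [mul_self_pos.2 hd]
    omega

lemma Vz_sublist_cons {s l : List ℝ} (hs : s.Sublist l) :
    (∀ x ∈ l, x ≠ 0) → ∀ a : ℝ, Vz (a :: s) ≤ Vz (a :: l) := by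
  induction hs with
  | slnil => intro _ _; exact le_refl _
  | @cons l₁ l₂ d h ih =>
    intro hl a
    have hl₂ : ∀ x ∈ l₂, x ≠ 0 := fun x hx => hl x (List.mem_cons_of_mem _ hx)
    exact (ih hl₂ a).trans (Vz_cons_cons_le a d _ (hl d (by simp)) hl₂)
  | cons_cons d h ih =>
    intro hl a
    rw [Vz_cons₂, Vz_cons₂]
    exact Nat.add_le_add_left (ih (fun x hx => hl x (List.mem_cons_of_mem _ hx)) d) _

lemma Vz_sublist {s l : List ℝ} (hs : s.Sublist l) (hl : ∀ x ∈ l, x ≠ 0) : Vz s ≤ Vz l := by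
  induction hs with
  | slnil => exact le_refl _
  | cons d h ih =>
    exact (ih (fun x hx => hl x (List.mem_cons_of_mem _ hx))).trans (Vz_cons_le d _)
  | cons_cons d h ih =>
    exact Vz_sublist_cons h (fun x hx => hl x (List.mem_cons_of_mem _ hx)) d

/-- an alternating list has Vz = length - 1 -/
lemma Vz_alt : ∀ (s : List ℝ), s.IsChain (fun a b => a * b < 0) → s ≠ [] → Vz s + 1 = s.length
  | [], _, h => absurd rfl h
  | [_], _, _ => rfl
  | a :: b :: l, hc, _ => by
    rw [List.isChain_cons_cons] at hc
    rw [Vz_cons₂, if_pos hc.1]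
    have := Vz_alt (b :: l) hc.2 (by simp)
    simp only [List.length_cons] at *
    omega

/-- extraction of a maximal alternating sublist, anchored at the head -/
lemma Vz_exists_alt : ∀ (l : List ℝ), (∀ x ∈ l, x ≠ 0) → l ≠ [] →
    ∃ s : List ℝ, s.Sublist l ∧ s.IsChain (fun a b => a * b < 0) ∧
      s.length = Vz l + 1 ∧ s.head? = l.head?
  | [], _, h => absurd rfl h
  | [a], _, _ => ⟨[a], by simp, by simp, by simp, rfl⟩
  | a :: b :: l, hl, _ => by
    obtain ⟨s', hsub, hchain, hlen, hhead⟩ :=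
      Vz_exists_alt (b :: l) (fun x hx => hl x (List.mem_cons_of_mem _ hx)) (by simp)
    cases s' with
    | nil => simp at hhead
    | cons c t =>
      have hcb : c = b := by simpa using hhead
      rw [hcb] at hsub hchain hlen
      by_cases hab : a * b < 0
      · refine ⟨a :: b :: t, List.Sublist.cons₂ a hsub, ?_, ?_, rfl⟩
        · rw [List.isChain_cons_cons]; exact ⟨hab, hchain⟩
        · simp only [List.length_cons] at *
          rw [Vz_cons₂, if_pos hab]; omega
      · have ha : a ≠ 0 := hl a (by simp)
        have hb : b ≠ 0 := hl b (by simp)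
        have hab' : 0 < a * b := lt_of_le_of_ne (not_lt.1 hab) (Ne.symm (mul_ne_zero ha hb))
        refine ⟨a :: t, ?_, ?_, ?_, rfl⟩
        · exact List.Sublist.cons₂ a ((List.sublist_cons_self b t).trans hsub)
        · cases t with
          | nil => simp
          | cons c t' =>
            rw [List.isChain_cons_cons] at hchain ⊢
            have hbc := hchain.1
            refine ⟨?_, hchain.2⟩
            nlinarith [mul_self_pos.2 hb, mul_pos hab' (neg_pos.2 hbc)]
        · simp only [List.length_cons] at *
          rw [Vz_cons₂, if_neg hab]; omega

/-- parity of Vz vs sign of head * last -/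
lemma Vz_parity : ∀ (l : List ℝ) (a : ℝ), (∀ x ∈ a :: l, x ≠ 0) →
    (Even (Vz (a :: l)) ↔ 0 < a * (a :: l).getLast (by simp))
  | [], a, h => by
    have ha : a ≠ 0 := h a (by simp)
    simp [mul_self_pos.2 ha]
  | b :: l, a, h => by
    have IH := Vz_parity l b (fun x hx => h x (List.mem_cons_of_mem _ hx))
    have hL : (b :: l).getLast (by simp) ≠ 0 :=
      h _ (List.mem_cons_of_mem _ (List.getLast_mem (by simp)))
    have ha : a ≠ 0 := h a (by simp)
    have hb : b ≠ 0 := h b (by simp)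
    set L := (b :: l).getLast (by simp) with hLdef
    rw [show ((a :: b :: l).getLast (by simp)) = L from List.getLast_cons (by simp), Vz_cons₂]
    by_cases hab : a * b < 0
    · rw [if_pos hab, Nat.add_comm, Nat.even_add_one, IH]
      constructor
      · intro h1
        have hbL : b * L < 0 := lt_of_le_of_ne (not_lt.1 h1) (mul_ne_zero hb hL)
        nlinarith [mul_self_pos.2 hb, mul_pos_of_neg_of_neg hab hbL]
      · intro h1 h2
        nlinarith [mul_self_pos.2 hL, mul_pos h1 h2]
    · have hab' : 0 < a * b := lt_of_le_of_ne (not_lt.1 hab) (Ne.symm (mul_ne_zero ha hb))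
      rw [if_neg hab, Nat.zero_add, IH]
      constructor <;> intro h1 <;>
        nlinarith [mul_self_pos.2 hb, mul_self_pos.2 ha, mul_pos hab' h1]



noncomputable def fl (p : Polynomial ℝ) : List ℝ :=
  ((List.range (p.natDegree + 1)).map fun i => p.coeff i).filter fun a => a ≠ 0

lemma signVar_eq_Vz (p : Polynomial ℝ) : signVar p = Vz (fl p) := vz_zip (fl p)

lemma fl_nonzero (p : Polynomial ℝ) : ∀ x ∈ fl p, x ≠ 0 := by
  intro x hx
  simpa using List.of_mem_filter hx

lemma fl_ne_nil {p : Polynomial ℝ} (hp : p ≠ 0) : fl p ≠ [] := by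
  have h1 : p.coeff p.natDegree ≠ 0 := by
    rw [← leadingCoeff]; exact leadingCoeff_ne_zero.2 hp
  refine List.ne_nil_of_mem (a := p.coeff p.natDegree) ?_
  refine List.mem_filter.2 ⟨List.mem_map.2 ⟨p.natDegree, List.mem_range.2 (Nat.lt_succ_self _), rfl⟩, by simpa using h1⟩

lemma chain'_congr_mem {α : Type*} {R S : α → α → Prop} :
    ∀ {l : List α}, (∀ a ∈ l, ∀ b ∈ l, R a b → S a b) → l.IsChain R → l.IsChain S
  | [], _, _ => List.IsChain.nil
  | [_], _, _ => List.isChain_singleton _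
  | a :: b :: l, h, hc => by
    rw [List.isChain_cons_cons] at hc ⊢
    refine ⟨h a (by simp) b (by simp) hc.1, ?_⟩
    exact chain'_congr_mem (fun x hx y hy => h x (List.mem_cons_of_mem _ hx) y (List.mem_cons_of_mem _ hy)) hc.2

lemma sorted_sublist_range : ∀ (N : ℕ) (ks : List ℕ), ks.Pairwise (· < ·) →
    (∀ i ∈ ks, i < N) → ks.Sublist (List.range N) := by
  intro N
  induction N with
  | zero =>
    intro ks _ hb
    cases ks with
    | nil => simp
    | cons a t => exact absurd (hb a (by simp)) (Nat.not_lt_zero a)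
  | succ N ih =>
    intro ks hp hb
    induction ks using List.reverseRecOn with
    | nil => simp
    | append_singleton ks' m _ =>
      have hks' : ∀ i ∈ ks', i < m := fun i hi =>
        (List.pairwise_append.1 hp).2.2 i hi m (by simp)
      by_cases hm : m = N
      · subst hm
        rw [List.range_succ]
        exact List.Sublist.append (ih ks' (List.pairwise_append.1 hp).1 hks') (List.Sublist.refl _)
      · have hb' : ∀ i ∈ ks' ++ [m], i < N := by
          intro i hi
          rcases List.mem_append.1 hi with h | h
          · have := hb m (by simp); have := hks' i h; omega
          · simp at h; subst h; have := hb i (by simp); omega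
        exact (ih _ hp hb').trans (by rw [List.range_succ]; exact List.sublist_append_left _ _)

/-- index lists with alternating coefficient signs bound signVar from below -/
lemma altIdx_length_le {p : Polynomial ℝ} {ks : List ℕ} (h1 : ks.IsChain (· < ·))
    (h2 : ks.IsChain fun i j => p.coeff i * p.coeff j < 0)
    (h3 : ∀ i ∈ ks, p.coeff i ≠ 0) : ks.length ≤ signVar p + 1 := by
  cases ks with
  | nil => simp
  | cons k t =>
  set ks := k :: t
  have hpair : ks.Pairwise (· < ·) := List.isChain_iff_pairwise.1 h1
  have hbnd : ∀ i ∈ ks, i < p.natDegree + 1 := fun i hi =>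
    Nat.lt_succ_of_le (le_natDegree_of_ne_zero (h3 i hi))
  have hsub : ks.Sublist (List.range (p.natDegree + 1)) := sorted_sublist_range _ _ hpair hbnd
  have hmap : (ks.map p.coeff).Sublist ((List.range (p.natDegree + 1)).map fun i => p.coeff i) :=
    hsub.map _
  have hfil : ((ks.map p.coeff).filter fun a => a ≠ 0) = ks.map p.coeff := by
    refine List.filter_eq_self.2 ?_
    intro x hx
    obtain ⟨i, hi, rfl⟩ := List.mem_map.1 hx
    simpa using h3 i hi
  have hsubfl : (ks.map p.coeff).Sublist (fl p) := by
    rw [← hfil]; exact List.Sublist.filter _ hmap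
  have hVz : Vz (ks.map p.coeff) ≤ Vz (fl p) := Vz_sublist hsubfl (fl_nonzero p)
  have hchain : (ks.map p.coeff).IsChain (fun a b => a * b < 0) := (List.isChain_map _).2 h2
  have hlen : Vz (ks.map p.coeff) + 1 = ks.length := by
    rw [Vz_alt _ hchain (by simp [ks]), List.length_map]
  rw [signVar_eq_Vz]
  omega

/-- existence of a maximal alternating index list -/
lemma exists_altIdx {p : Polynomial ℝ} (hp : p ≠ 0) :
    ∃ ks : List ℕ, ks.IsChain (· < ·) ∧ (ks.IsChain fun i j => p.coeff i * p.coeff j < 0) ∧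
      (∀ i ∈ ks, p.coeff i ≠ 0) ∧ ks.length = signVar p + 1 := by
  obtain ⟨s, hsub, hchain, hlen, -⟩ := Vz_exists_alt (fl p) (fl_nonzero p) (fl_ne_nil hp)
  have hsub2 : s.Sublist (((List.range (p.natDegree + 1))).map fun i => p.coeff i) :=
    hsub.trans List.filter_sublist
  obtain ⟨ks, hks, hmapeq⟩ := List.sublist_map_iff.1 hsub2
  have hpair : ks.Pairwise (· < ·) := List.pairwise_lt_range.sublist hks
  refine ⟨ks, List.isChain_iff_pairwise.2 hpair, ?_, ?_, ?_⟩
  · exact (List.isChain_map _).1 (hmapeq ▸ hchain)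
  · intro i hi
    exact fl_nonzero p _ (hsub.subset (hmapeq ▸ List.mem_map_of_mem hi))
  · rw [← signVar_eq_Vz] at hlen
    rw [← hlen, hmapeq, List.length_map]



lemma signVar_zero : signVar (0 : Polynomial ℝ) = 0 := by
  simp [signVar]

lemma chain'_and {α : Type*} {R S : α → α → Prop} :
    ∀ {l : List α}, l.IsChain R → l.IsChain S → l.IsChain (fun a b => R a b ∧ S a b)
  | [], _, _ => List.IsChain.nil
  | [_], _, _ => List.isChain_singleton _
  | a :: b :: l, hr, hs => by
    rw [List.isChain_cons_cons] at hr hs ⊢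
    exact ⟨⟨hr.1, hs.1⟩, chain'_and hr.2 hs.2⟩

/-- multiplying by (X+1) does not increase sign variation -/
lemma signVar_X_add_one_mul (p : Polynomial ℝ) : signVar ((X + 1) * p) ≤ signVar p := by
  rcases eq_or_ne p 0 with rfl | hp
  · simp [signVar_zero]
  have hX1 : (X + 1 : Polynomial ℝ) ≠ 0 := by
    have := Polynomial.monic_X_add_C (1 : ℝ)
    rw [map_one] at this
    exact this.ne_zero
  have hq : (X + 1 : Polynomial ℝ) * p ≠ 0 := mul_ne_zero hX1 hp
  set q : Polynomial ℝ := (X + 1) * p with hqdef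
  obtain ⟨ks, hs, ha, hnz, hlen⟩ := exists_altIdx hq
  have hco : ∀ j : ℕ, q.coeff (j + 1) = p.coeff j + p.coeff (j + 1) := by
    intro j
    rw [hqdef, add_mul, one_mul, coeff_add, coeff_X_mul]
  have hco0 : q.coeff 0 = p.coeff 0 := by
    rw [hqdef, add_mul, one_mul, coeff_add, mul_coeff_zero]
    simp
  set f : ℕ → ℕ := fun k => if 0 < q.coeff k * p.coeff k then k else k - 1 with hfdef
  have key : ∀ k, q.coeff k ≠ 0 → 0 < q.coeff k * p.coeff (f k) := by
    intro k hk
    by_cases h0 : 0 < q.coeff k * p.coeff k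
    · simpa [hfdef, h0] using h0
    · have hfk : f k = k - 1 := by simp [hfdef, h0]
      cases k with
      | zero =>
        exfalso
        rw [hco0] at h0 hk
        exact h0 (mul_self_pos.2 hk)
      | succ j =>
        rw [hfk]
        simp only [Nat.add_sub_cancel]
        have h1 := hco j
        have h3 : q.coeff (j+1) * q.coeff (j+1) =
            q.coeff (j+1) * p.coeff j + q.coeff (j+1) * p.coeff (j+1) := by
          nth_rewrite 2 [h1]; ring
        nlinarith [mul_self_pos.2 hk, h3]
  have hb1 : ∀ k, f k ≤ k := by intro k; rw [hfdef]; dsimp only; split <;> omega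
  have hb2 : ∀ k, k - 1 ≤ f k := by intro k; rw [hfdef]; dsimp only; split <;> omega
  have step : ∀ i j, i < j → q.coeff i * q.coeff j < 0 → q.coeff i ≠ 0 → q.coeff j ≠ 0 →
      f i < f j ∧ p.coeff (f i) * p.coeff (f j) < 0 := by
    intro i j hij halt hi hj
    have ki := key i hi
    have kj := key j hj
    have hpp : p.coeff (f i) * p.coeff (f j) < 0 := by nlinarith [mul_pos ki kj]
    refine ⟨?_, hpp⟩
    have h1 := hb1 i
    have h2 := hb2 j
    have : f i ≤ f j := by omega
    rcases this.lt_or_eq with h | h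
    · exact h
    · exfalso; rw [h] at hpp; nlinarith [mul_self_nonneg (p.coeff (f j))]
  have hcomb : ks.IsChain (fun i j => (i < j ∧ q.coeff i * q.coeff j < 0)) := chain'_and hs ha
  have hmapped : (ks.map f).IsChain (fun i j => (i < j ∧ p.coeff i * p.coeff j < 0)) := by
    rw [List.isChain_map]
    refine chain'_congr_mem (fun i hi j hj hR => ?_) hcomb
    exact step i j hR.1 hR.2 (hnz i hi) (hnz j hj)
  have hlen2 : (ks.map f).length ≤ signVar p + 1 := by
    refine altIdx_length_le (List.IsChain.imp (fun a b h => h.1) hmapped)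
      (List.IsChain.imp (fun a b h => h.2) hmapped) ?_
    intro i hi
    obtain ⟨k, hk, rfl⟩ := List.mem_map.1 hi
    have := key k (hnz k hk)
    intro h0
    rw [h0, mul_zero] at this
    exact lt_irrefl _ this
  rw [List.length_map] at hlen2
  omega

lemma signVar_X_add_one_pow_mul : ∀ (b : ℕ) (p : Polynomial ℝ),
    signVar ((X + 1) ^ b * p) ≤ signVar p := by
  intro b
  induction b with
  | zero => intro p; simp
  | succ b ih =>
    intro p
    have e : (X + 1 : Polynomial ℝ) ^ (b + 1) * p = (X + 1) ^ b * ((X + 1) * p) := by ring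
    rw [e]
    exact (ih _).trans (signVar_X_add_one_mul p)

/-- changing a single coefficient increases signVar by at most 2 -/
lemma signVar_coeff_change {p r : Polynomial ℝ} (a : ℕ)
    (h : ∀ i, i ≠ a → p.coeff i = r.coeff i) : signVar p ≤ signVar r + 2 := by
  rcases eq_or_ne p 0 with rfl | hp
  · rw [signVar_zero]; omega
  obtain ⟨ks, hs, ha, hnz, hlen⟩ := exists_altIdx hp
  by_cases hmem : a ∈ ks
  · obtain ⟨u, w, rfl⟩ := List.append_of_mem hmem
    have hpw : (u ++ a :: w).Pairwise (· < ·) := List.isChain_iff_pairwise.1 hs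
    have hua : ∀ x ∈ u, x < a := fun x hx =>
      (List.pairwise_append.1 hpw).2.2 x hx a (by simp)
    have haw : ∀ y ∈ w, a < y := fun y hy =>
      (List.pairwise_cons.1 (List.pairwise_append.1 hpw).2.1).1 y hy
    set ks' := u ++ w.tail with hks'
    have hsub' : ks'.Sublist (u ++ a :: w) :=
      List.Sublist.append (List.Sublist.refl u)
        ((List.tail_sublist w).trans (List.sublist_cons_self a w))
    have hne : ∀ i ∈ ks', i ≠ a := by
      intro i hi
      rcases List.mem_append.1 hi with h' | h'
      · exact Nat.ne_of_lt (hua i h')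
      · exact (Nat.ne_of_lt (haw i (List.mem_of_mem_tail h'))).symm
    have hs' : ks'.IsChain (· < ·) := List.isChain_iff_pairwise.2 (hpw.sublist hsub')
    -- alternation of p on ks'
    have hadec := List.isChain_append.1 ha
    have hcaw : (a :: w).IsChain (fun i j => p.coeff i * p.coeff j < 0) := hadec.2.1
    have hchain_w : w.IsChain (fun i j => p.coeff i * p.coeff j < 0) :=
      (List.isChain_cons.1 hcaw).2
    have halt' : ks'.IsChain (fun i j => p.coeff i * p.coeff j < 0) := by
      rw [hks', List.isChain_append]
      refine ⟨hadec.1, hchain_w.tail, ?_⟩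
      intro x hx y hy
      have hxa : p.coeff x * p.coeff a < 0 := hadec.2.2 x hx a (by simp)
      cases w with
      | nil => simp at hy
      | cons b w' =>
        have hyh : y ∈ w'.head? := hy
        have hab : p.coeff a * p.coeff b < 0 := (List.isChain_cons.1 hcaw).1 b (by simp)
        have hby : p.coeff b * p.coeff y < 0 := (List.isChain_cons.1 hchain_w).1 y hyh
        have hanz : p.coeff a ≠ 0 := hnz a (by simp)
        have hbnz : p.coeff b ≠ 0 := hnz b (by simp)
        nlinarith [mul_self_pos.2 hanz, mul_self_pos.2 hbnz,
          mul_pos_of_neg_of_neg hxa hab, mul_pos_of_neg_of_neg hab hby]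
    -- transfer to r
    have haltr : ks'.IsChain (fun i j => r.coeff i * r.coeff j < 0) := by
      refine chain'_congr_mem (fun i hi j hj hR => ?_) halt'
      rw [← h i (hne i hi), ← h j (hne j hj)]; exact hR
    have hsr : ks'.length ≤ signVar r + 1 := by
      refine altIdx_length_le hs' haltr ?_
      intro i hi
      rw [← h i (hne i hi)]
      exact hnz i (hsub'.subset hi)
    have hlu : (u ++ a :: w).length = u.length + w.length + 1 := by
      rw [List.length_append, List.length_cons]; omega
    have hlu' : ks'.length + 1 ≥ u.length + w.length := by
      rw [hks']; simp [List.length_tail]; omega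
    omega
  · have haltr : ks.IsChain (fun i j => r.coeff i * r.coeff j < 0) := by
      refine chain'_congr_mem (fun i hi j hj hR => ?_) ha
      rw [← h i (fun he => hmem (he ▸ hi)), ← h j (fun he => hmem (he ▸ hj))]; exact hR
    have : ks.length ≤ signVar r + 1 := by
      refine altIdx_length_le hs haltr ?_
      intro i hi
      rw [← h i (fun he => hmem (he ▸ hi))]
      exact hnz i hi
    omega

/-- signVar of the derivative is at most signVar -/
lemma signVar_derivative_le (p : Polynomial ℝ) : signVar (derivative p) ≤ signVar p := by
  rcases eq_or_ne (derivative p) 0 with h0 | h0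
  · rw [h0, signVar_zero]; omega
  obtain ⟨ks, hs, ha, hnz, hlen⟩ := exists_altIdx h0
  have hci : ∀ i : ℕ, (0:ℝ) < (i : ℝ) + 1 := fun i => by positivity
  have hmap_s : (ks.map (· + 1)).IsChain (· < ·) := by
    rw [List.isChain_map]
    exact hs.imp (fun h => by omega)
  have hmap_a : (ks.map (· + 1)).IsChain (fun i j => p.coeff i * p.coeff j < 0) := by
    rw [List.isChain_map]
    refine ha.imp (fun {i j} hR => ?_)
    rw [coeff_derivative, coeff_derivative] at hR
    nlinarith [hci i, hci j, mul_pos (hci i) (hci j)]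
  have hmap_nz : ∀ i ∈ ks.map (· + 1), p.coeff i ≠ 0 := by
    intro i hi
    obtain ⟨k, hk, rfl⟩ := List.mem_map.1 hi
    have := hnz k hk
    rw [coeff_derivative] at this
    intro h'
    rw [h'] at this
    simp at this
  have := altIdx_length_le hmap_s hmap_a hmap_nz
  rw [List.length_map] at this
  omega



lemma Vz_parity' (l : List ℝ) (a L : ℝ) (h : ∀ x ∈ a :: l, x ≠ 0)
    (hL : (a :: l).getLast? = some L) : (Even (Vz (a :: l)) ↔ 0 < a * L) := by
  rw [List.getLast?_eq_getLast (by simp), Option.some_inj] at hL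
  rw [Vz_parity l a h, hL]

/-- head of fl is the trailing coefficient -/
lemma fl_head {p : Polynomial ℝ} (hp : p ≠ 0) :
    ∃ l', fl p = p.trailingCoeff :: l' := by
  have hntd : p.natTrailingDegree ≤ p.natDegree := natTrailingDegree_le_natDegree p
  have hsplit : p.natDegree + 1 = p.natTrailingDegree + (p.natDegree + 1 - p.natTrailingDegree) :=
    by omega
  have h2 : ∃ m, p.natDegree + 1 - p.natTrailingDegree = m + 1 := ⟨p.natDegree - p.natTrailingDegree, by omega⟩
  obtain ⟨m, hm⟩ := h2
  rw [fl, hsplit, hm, List.range_add, List.map_append, List.filter_append]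
  have h3 : (((List.range p.natTrailingDegree).map fun i => p.coeff i).filter fun a => a ≠ 0) = [] := by
    rw [List.filter_eq_nil_iff]
    intro x hx
    obtain ⟨i, hi, rfl⟩ := List.mem_map.1 hx
    simp only [List.mem_range] at hi
    simp [coeff_eq_zero_of_lt_natTrailingDegree hi]
  rw [h3, List.nil_append, List.range_succ_eq_map]
  simp only [List.map_cons, List.map_map]
  rw [List.filter_cons]
  have h4 : p.coeff (p.natTrailingDegree + 0) = p.trailingCoeff := by
    rw [Nat.add_zero]; rfl
  rw [h4]
  have h5 : p.trailingCoeff ≠ 0 := trailingCoeff_nonzero_iff_nonzero.2 hp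
  simp only [h5, ne_eq, not_false_eq_true, decide_eq_true_eq, if_true]
  exact ⟨_, rfl⟩

/-- last of fl is the leading coefficient -/
lemma fl_getLast? {p : Polynomial ℝ} (hp : p ≠ 0) :
    (fl p).getLast? = some p.leadingCoeff := by
  rw [fl, List.range_succ, List.map_append, List.filter_append]
  have h1 : p.coeff p.natDegree = p.leadingCoeff := rfl
  have h2 : p.leadingCoeff ≠ 0 := leadingCoeff_ne_zero.2 hp
  simp only [List.map_cons, List.map_nil, List.filter_cons, h1, h2, ne_eq, not_false_eq_true,
    decide_eq_true_eq, if_true, List.filter_nil]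
  exact List.getLast?_concat

/-- parity of signVar -/
lemma signVar_parity {p : Polynomial ℝ} (hp : p ≠ 0) :
    Even (signVar p) ↔ 0 < p.trailingCoeff * p.leadingCoeff := by
  obtain ⟨l', hfl⟩ := fl_head hp
  have hlast := fl_getLast? hp
  rw [hfl] at hlast
  have hnz : ∀ x ∈ p.trailingCoeff :: l', x ≠ 0 := by
    rw [← hfl]; exact fl_nonzero p
  rw [signVar_eq_Vz, hfl]
  exact Vz_parity' l' _ _ hnz hlast



/-- a polynomial of the form c x^a (x+1)^b has no sign variation -/
lemma signVar_single (c : ℝ) (a b : ℕ) : signVar (C c * X ^ a * (X + 1) ^ b) = 0 := by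
  set p : Polynomial ℝ := C c * X ^ a * (X + 1) ^ b with hp
  have hform : ∀ i : ℕ, ∃ m : ℕ, p.coeff i = c * m := by
    intro i
    have e : p = (C c * (X + 1) ^ b) * X ^ a := by rw [hp]; ring
    rw [e, coeff_mul_X_pow']
    split
    · rw [coeff_C_mul, coeff_X_add_one_pow]
      exact ⟨_, rfl⟩
    · exact ⟨0, by simp⟩
  have : signVar p = (((fl p).zip (fl p).tail).countP fun q => decide (q.1 * q.2 < 0)) := rfl
  rw [this]
  refine List.countP_eq_zero.2 ?_
  rintro ⟨x, y⟩ hq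
  obtain ⟨hx, hy⟩ := List.of_mem_zip hq
  have hy' : y ∈ fl p := List.mem_of_mem_tail hy
  have hxf : ∃ m : ℕ, x = c * m := by
    obtain ⟨hx1, -⟩ := List.mem_filter.1 hx
    obtain ⟨i, -, rfl⟩ := List.mem_map.1 hx1
    exact hform i
  have hyf : ∃ m : ℕ, y = c * m := by
    obtain ⟨hy1, -⟩ := List.mem_filter.1 hy'
    obtain ⟨i, -, rfl⟩ := List.mem_map.1 hy1
    exact hform i
  obtain ⟨m, rfl⟩ := hxf
  obtain ⟨m', rfl⟩ := hyf
  simp only [decide_eq_true_eq, not_lt]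
  have h1 : (c * m) * (c * m') = c ^ 2 * (m * m') := by ring
  rw [h1]
  positivity

/-- multiplying by X preserves signVar -/
lemma signVar_mul_X (p : Polynomial ℝ) (hp : p ≠ 0) : signVar (p * X) = signVar p := by
  have h0 : (p * X).coeff 0 = 0 := by
    rw [mul_coeff_zero, coeff_X_zero, mul_zero]
  have hmap : List.map ((fun i => (p * X).coeff i) ∘ Nat.succ) (List.range (p.natDegree + 1))
      = List.map (fun i => p.coeff i) (List.range (p.natDegree + 1)) := by
    refine List.map_congr_left ?_
    intro i _
    simp [Function.comp, coeff_mul_X]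
  have hfl : fl (p * X) = fl p := by
    rw [fl, fl, natDegree_mul_X hp, List.range_succ_eq_map, List.map_cons, List.map_map, hmap, h0,
      List.filter_cons_of_neg (by simp)]
  rw [signVar_eq_Vz, signVar_eq_Vz, hfl]

/-- Rolle: positive roots with multiplicity vs derivative -/
lemma posroots_le_derivative (p : Polynomial ℝ) :
    Multiset.card (p.roots.filter fun x => 0 < x) ≤
      Multiset.card ((derivative p).roots.filter fun x => 0 < x) + 1 := by
  rcases eq_or_ne (derivative p) 0 with hp' | hp'
  · rw [eq_C_of_derivative_eq_zero hp', roots_C]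
    simp
  have hp : p ≠ 0 := ne_of_apply_ne derivative (by rwa [derivative_zero])
  set P : Multiset ℝ := p.roots.filter (fun x => 0 < x) with hP
  set P' : Multiset ℝ := (derivative p).roots.filter (fun x => 0 < x) with hP'
  have step1 : P.toFinset.card ≤ (P'.toFinset \ P.toFinset).card + 1 := by
    refine Finset.card_le_diff_of_interleaved fun x hx y hy hxy _ => ?_
    rw [Multiset.mem_toFinset, hP, Multiset.mem_filter] at hx hy
    have hx0 : eval x p = 0 := (mem_roots hp).1 hx.1
    have hy0 : eval y p = 0 := (mem_roots hp).1 hy.1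
    obtain ⟨z, hz1, hz2⟩ := exists_deriv_eq_zero hxy p.continuousOn (hx0.trans hy0.symm)
    refine ⟨z, ?_, hz1⟩
    rw [Multiset.mem_toFinset, hP', Multiset.mem_filter]
    constructor
    · rw [mem_roots hp', IsRoot, ← p.deriv]
      exact hz2
    · exact lt_trans hx.2 hz1.1
  have hcount : ∀ x ∈ P.toFinset, P.count x = p.rootMultiplicity x := by
    intro x hx
    rw [Multiset.mem_toFinset, hP, Multiset.mem_filter] at hx
    rw [hP, Multiset.count_filter_of_pos hx.2, count_roots]
  have hcount' : ∀ x, 0 < x → P'.count x = (derivative p).rootMultiplicity x := by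
    intro x hx
    rw [hP', Multiset.count_filter_of_pos hx, count_roots]
  calc
    Multiset.card P = ∑ x ∈ P.toFinset, P.count x := (Multiset.toFinset_sum_count_eq _).symm
    _ = ∑ x ∈ P.toFinset, (P.count x - 1 + 1) :=
      (Eq.symm <| Finset.sum_congr rfl fun _ hx => tsub_add_cancel_of_le <|
        Nat.succ_le_iff.2 <| Multiset.count_pos.2 <| Multiset.mem_toFinset.1 hx)
    _ = (∑ x ∈ P.toFinset, (P.count x - 1)) + P.toFinset.card := by
      simp only [Finset.sum_add_distrib, Finset.card_eq_sum_ones]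
    _ ≤ (∑ x ∈ P.toFinset, P'.count x) + ((P'.toFinset \ P.toFinset).card + 1) := by
      refine add_le_add (Finset.sum_le_sum fun x hx => ?_) step1
      have hx0 : 0 < x := by
        have := Multiset.mem_toFinset.1 hx
        rw [hP, Multiset.mem_filter] at this
        exact this.2
      rw [hcount x hx, hcount' x hx0]
      exact rootMultiplicity_sub_one_le_derivative_rootMultiplicity _ _
    _ ≤ (∑ x ∈ P.toFinset, P'.count x) +
          ((∑ x ∈ P'.toFinset \ P.toFinset, P'.count x) + 1) := by
      refine add_le_add_right (add_le_add_left ((Finset.card_eq_sum_ones _).trans_le ?_) _) _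
      refine Finset.sum_le_sum fun x hx => Nat.succ_le_iff.2 ?_
      rw [Multiset.count_pos, ← Multiset.mem_toFinset]
      exact (Finset.mem_sdiff.1 hx).1
    _ = (∑ x ∈ P.toFinset ∪ (P'.toFinset \ P.toFinset), P'.count x) + 1 := by
      rw [← add_assoc, ← Finset.sum_union Finset.disjoint_sdiff]
    _ ≤ Multiset.card P' + 1 := by
      refine add_le_add_left ?_ _
      set s := P.toFinset ∪ (P'.toFinset \ P.toFinset)
      calc ∑ x ∈ s, P'.count x = ∑ x ∈ s ∩ P'.toFinset, P'.count x := by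
            refine (Finset.sum_subset Finset.inter_subset_left fun x _ hx' => ?_).symm
            rw [Multiset.count_eq_zero]
            intro hmem
            exact hx' (Finset.mem_inter.2 ⟨‹x ∈ s›, Multiset.mem_toFinset.2 hmem⟩)
          _ ≤ ∑ x ∈ P'.toFinset, P'.count x :=
            Finset.sum_le_sum_of_subset Finset.inter_subset_right
          _ = Multiset.card P' := Multiset.toFinset_sum_count_eq _

lemma eval_zero_pos_of_no_posroot {p : Polynomial ℝ} (hdeg : p.natDegree ≠ 0)
    (hL : 0 < p.leadingCoeff) (h0 : eval 0 p ≠ 0)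
    (hroots : ∀ x ∈ p.roots, ¬(0 < x)) : 0 < eval 0 p := by
  have hp : p ≠ 0 := fun h => hL.ne' (by rw [h, leadingCoeff_zero])
  by_contra hneg
  have h0' : eval 0 p < 0 := lt_of_le_of_ne (not_lt.1 hneg) h0
  have htend : Filter.Tendsto (fun x => eval x p) Filter.atTop Filter.atTop :=
    p.tendsto_atTop_of_leadingCoeff_nonneg
      (natDegree_pos_iff_degree_pos.1 (Nat.pos_of_ne_zero hdeg)) hL.le
  obtain ⟨M, hM⟩ := Filter.eventually_atTop.1 (htend.eventually_ge_atTop 1)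
  set x : ℝ := max M 1 with hx
  have hx0 : (0:ℝ) ≤ x := le_trans zero_le_one (le_max_right _ _)
  have hpx : 0 < eval x p := lt_of_lt_of_le zero_lt_one (hM x (le_max_left _ _))
  have : (0:ℝ) ∈ Set.Ioo (eval 0 p) (eval x p) := ⟨h0', hpx⟩
  obtain ⟨c, hc1, hc2⟩ := intermediate_value_Ioo hx0 p.continuousOn this
  refine hroots c ?_ hc1.1
  rw [mem_roots hp]
  exact hc2

lemma no_posroot_sign {p : Polynomial ℝ} (hp : p ≠ 0) (h0 : eval 0 p ≠ 0)
    (hroots : ∀ x ∈ p.roots, ¬(0 < x)) : 0 < eval 0 p * p.leadingCoeff := by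
  by_cases hd : p.natDegree = 0
  · obtain ⟨a, ha⟩ := natDegree_eq_zero.1 hd
    subst ha
    have ha0 : a ≠ 0 := by simpa using h0
    simp only [eval_C, leadingCoeff_C]
    exact mul_self_pos.2 ha0
  · rcases lt_trichotomy p.leadingCoeff 0 with hL | hL | hL
    · have hd' : (-p).natDegree ≠ 0 := by rwa [natDegree_neg]
      have hL' : 0 < (-p).leadingCoeff := by rw [leadingCoeff_neg]; linarith
      have h0' : eval 0 (-p) ≠ 0 := by simpa using h0
      have hroots' : ∀ x ∈ (-p).roots, ¬(0 < x) := by rw [roots_neg]; exact hroots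
      have := eval_zero_pos_of_no_posroot hd' hL' h0' hroots'
      rw [eval_neg] at this
      nlinarith
    · exact absurd (leadingCoeff_eq_zero.1 hL) hp
    · have := eval_zero_pos_of_no_posroot hd hL h0 hroots
      exact mul_pos this hL

lemma posroots_parity : ∀ (n : ℕ) (p : Polynomial ℝ), p ≠ 0 → eval 0 p ≠ 0 → p.natDegree ≤ n →
    (Even (Multiset.card (p.roots.filter fun x => 0 < x)) ↔ 0 < eval 0 p * p.leadingCoeff) := by
  intro n
  induction n with
  | zero =>
    intro p hp h0 hdeg
    obtain ⟨a, ha⟩ := natDegree_eq_zero.1 (Nat.le_zero.1 hdeg)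
    subst ha
    have ha0 : a ≠ 0 := by simpa using h0
    simp [roots_C, mul_self_pos.2 ha0]
  | succ n ih =>
    intro p hp h0 hdeg
    by_cases hex : ∃ r ∈ p.roots, 0 < r
    · obtain ⟨r, hr, hr0⟩ := hex
      have hroot : IsRoot p r := (mem_roots hp).1 hr
      obtain ⟨q, hq⟩ := dvd_iff_isRoot.2 hroot
      have hq0 : q ≠ 0 := fun h => hp (by rw [hq, h, mul_zero])
      have hroots_eq : p.roots = r ::ₘ q.roots := by
        rw [hq, roots_mul (hq ▸ hp), roots_X_sub_C, Multiset.singleton_add]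
      have heval : eval 0 p = -r * eval 0 q := by
        rw [hq, eval_mul]
        simp
      have hq00 : eval 0 q ≠ 0 := fun h => h0 (by rw [heval, h, mul_zero])
      have hlead : p.leadingCoeff = q.leadingCoeff := by
        rw [hq, leadingCoeff_mul, (monic_X_sub_C r).leadingCoeff, one_mul]
      have hdegq : q.natDegree ≤ n := by
        have hnd : p.natDegree = q.natDegree + 1 := by
          rw [hq, natDegree_mul (X_sub_C_ne_zero r) hq0, natDegree_X_sub_C]
          omega
        omega
      have IH := ih q hq0 hq00 hdegq
      rw [hroots_eq, Multiset.filter_cons_of_pos _ hr0, Multiset.card_cons, Nat.even_add_one, IH,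
        heval, hlead]
      have hne : eval 0 q * q.leadingCoeff ≠ 0 :=
        mul_ne_zero hq00 (leadingCoeff_ne_zero.2 hq0)
      constructor
      · intro h1
        have h2 : eval 0 q * q.leadingCoeff < 0 := lt_of_le_of_ne (not_lt.1 h1) hne
        nlinarith
      · intro h1 h2
        nlinarith
    · push_neg at hex
      have hfil : p.roots.filter (fun x => 0 < x) = 0 :=
        Multiset.filter_eq_nil.2 fun a ha => not_lt.2 (hex a ha)
      rw [hfil]
      simp only [Multiset.card_zero, Even.zero, true_iff]
      exact no_posroot_sign hp h0 fun x hx => not_lt.2 (hex x hx)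


/-- Descartes' rule of signs -/
lemma descartes_aux : ∀ (n : ℕ) (p : Polynomial ℝ), p ≠ 0 → p.natDegree ≤ n →
    Multiset.card (p.roots.filter fun x => 0 < x) ≤ signVar p := by
  intro n
  induction n with
  | zero =>
    intro p hp hdeg
    obtain ⟨a, ha⟩ := natDegree_eq_zero.1 (Nat.le_zero.1 hdeg)
    subst ha
    simp [roots_C]
  | succ n ih =>
    intro p hp hdeg
    by_cases h00 : p.coeff 0 = 0
    · obtain ⟨q, hq⟩ := X_dvd_iff.2 h00
      have hq0 : q ≠ 0 := fun h => hp (by rw [hq, h, mul_zero])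
      have hq' : p = q * X := by rw [hq, mul_comm]
      have hdegq : q.natDegree ≤ n := by
        have : p.natDegree = q.natDegree + 1 := by rw [hq', natDegree_mul_X hq0]
        omega
      have hroots : p.roots.filter (fun x => 0 < x) = q.roots.filter (fun x => 0 < x) := by
        rw [hq', roots_mul (hq' ▸ hp), roots_X, Multiset.filter_add]
        simp [Multiset.filter_singleton]
      rw [hroots, hq', signVar_mul_X q hq0]
      exact ih q hq0 hdegq
    · by_cases hd0 : p.natDegree = 0
      · obtain ⟨a, ha⟩ := natDegree_eq_zero.1 hd0
        subst ha
        simp [roots_C]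
      · have hder0 : derivative p ≠ 0 := fun h => hd0 (by rw [eq_C_of_derivative_eq_zero h]; simp)
        have h1 := posroots_le_derivative p
        have h2 : Multiset.card ((derivative p).roots.filter fun x => 0 < x) ≤
            signVar (derivative p) := by
          refine ih (derivative p) hder0 ?_
          have := natDegree_derivative_lt hd0
          omega
        have h3 := signVar_derivative_le p
        have he0 : eval 0 p ≠ 0 := by rwa [← coeff_zero_eq_eval_zero]
        have hpar1 := posroots_parity p.natDegree p hp he0 le_rfl
        have hpar2 := signVar_parity hp
        have htr : p.trailingCoeff = eval 0 p := by
          rw [trailingCoeff, natTrailingDegree_eq_zero.2 (Or.inr h00), coeff_zero_eq_eval_zero]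
        rw [htr] at hpar2
        have hiff := hpar1.trans hpar2.symm
        rw [Nat.even_iff, Nat.even_iff] at hiff
        omega



/-- main induction: signVar of a t-term sum of monomials in X, X+1 -/
lemma main_sv : ∀ (t : ℕ) (S : Finset (ℕ × ℕ)) (c : ℕ × ℕ → ℝ), S.card ≤ t →
    signVar (∑ q ∈ S, C (c q) * X ^ q.1 * (X + 1) ^ q.2) ≤ 2 * t - 2 := by
  intro t
  induction t with
  | zero =>
    intro S c hS
    rw [Finset.card_eq_zero.1 (Nat.le_zero.1 hS), Finset.sum_empty, signVar_zero]
  | succ t ih =>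
    intro S c hS
    rcases Finset.eq_empty_or_nonempty S with rfl | hne
    · rw [Finset.sum_empty, signVar_zero]
      exact Nat.zero_le _
    have hBne : (S.image Prod.snd).Nonempty := hne.image _
    set b₀ := (S.image Prod.snd).min' hBne with hb₀
    have hmin : ∀ q ∈ S, b₀ ≤ q.2 := fun q hq =>
      Finset.min'_le _ _ (Finset.mem_image_of_mem _ hq)
    obtain ⟨j, hjS, hj2⟩ := Finset.mem_image.1 ((S.image Prod.snd).min'_mem hBne)
    -- factor out (X+1)^b₀
    have hfact : (∑ q ∈ S, C (c q) * X ^ q.1 * (X + 1) ^ q.2)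
        = (X + 1) ^ b₀ * ∑ q ∈ S, C (c q) * X ^ q.1 * (X + 1) ^ (q.2 - b₀) := by
      rw [Finset.mul_sum]
      refine Finset.sum_congr rfl fun q hq => ?_
      have h1 : q.2 = b₀ + (q.2 - b₀) := by have := hmin q hq; omega
      nth_rewrite 1 [h1]
      rw [pow_add]
      ring
    set h : Polynomial ℝ := ∑ q ∈ S, C (c q) * X ^ q.1 * (X + 1) ^ (q.2 - b₀) with hh
    have step1 : signVar (∑ q ∈ S, C (c q) * X ^ q.1 * (X + 1) ^ q.2) ≤ signVar h := by
      rw [hfact]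
      exact signVar_X_add_one_pow_mul b₀ h
    -- single-monomial case
    by_cases hcard : S.card ≤ 1
    · have hSj : S = {j} := Finset.eq_singleton_iff_unique_mem.2 ⟨hjS, fun x hx => by
        have := Finset.card_le_one.1 hcard x hx j hjS
        exact this⟩
      rw [hSj, Finset.sum_singleton, signVar_single]
      omega
    -- split off the term j
    push_neg at hcard
    set r : Polynomial ℝ := ∑ q ∈ S.erase j, C (c q) * X ^ q.1 * (X + 1) ^ (q.2 - b₀) with hr
    have hsplit : h = C (c j) * X ^ j.1 * (X + 1) ^ (j.2 - b₀) + r := by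
      rw [hh, hr, ← Finset.add_sum_erase _ _ hjS]
    have hj2' : j.2 - b₀ = 0 := by omega
    have hcoeff : ∀ i, i ≠ j.1 → h.coeff i = r.coeff i := by
      intro i hi
      rw [hsplit, coeff_add, hj2', pow_zero, mul_one, coeff_C_mul, coeff_X_pow,
        if_neg hi, mul_zero, zero_add]
    have step2 : signVar h ≤ signVar r + 2 := signVar_coeff_change j.1 hcoeff
    -- reindex r for the induction hypothesis
    set φ : ℕ × ℕ → ℕ × ℕ := fun q => (q.1, q.2 - b₀) with hφ
    have hinj : Set.InjOn φ (S.erase j) := by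
      intro x hx y hy hxy
      have hx2 := hmin x (Finset.mem_of_mem_erase hx)
      have hy2 := hmin y (Finset.mem_of_mem_erase hy)
      have h1 := congrArg Prod.fst hxy
      have h2 := congrArg Prod.snd hxy
      simp only [hφ] at h1 h2
      exact Prod.ext h1 (by omega)
    set c' : ℕ × ℕ → ℝ := fun q => c (q.1, q.2 + b₀) with hc'
    have hrS' : r = ∑ q ∈ (S.erase j).image φ, C (c' q) * X ^ q.1 * (X + 1) ^ q.2 := by
      rw [Finset.sum_image (fun x hx y hy => hinj hx hy)]
      refine Finset.sum_congr rfl fun q hq => ?_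
      have hq2 := hmin q (Finset.mem_of_mem_erase hq)
      have hqq : (q.1, q.2 - b₀ + b₀) = q := Prod.ext rfl (by omega)
      rw [hc', hφ]
      dsimp only
      rw [hqq]
    have hcard' : ((S.erase j).image φ).card ≤ t := by
      have := Finset.card_image_le (s := S.erase j) (f := φ)
      have := Finset.card_erase_of_mem hjS
      omega
    have step3 : signVar r ≤ 2 * t - 2 := by
      rw [hrS']
      exact ih _ c' hcard'
    omega



noncomputable def epair : ℕ × ℕ → (Fin 2 →₀ ℕ) :=
  fun q => Finsupp.single 0 q.1 + Finsupp.single 1 q.2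

lemma epair_pair (v : Fin 2 →₀ ℕ) : epair (v 0, v 1) = v := by
  ext i
  fin_cases i <;> simp [epair, Finsupp.single_apply]

lemma subXX1_eq_sum (f : MvPolynomial (Fin 2) ℝ) :
    subXX1 f = ∑ v ∈ f.support, C (MvPolynomial.coeff v f) * X ^ (v 0) * (X + 1) ^ (v 1) := by
  rw [subXX1]
  nth_rewrite 1 [← MvPolynomial.support_sum_monomial_coeff f]
  rw [map_sum]
  refine Finset.sum_congr rfl fun v _ => ?_
  rw [MvPolynomial.aeval_monomial]
  have : (v.prod fun i k => (![Polynomial.X, Polynomial.X + 1] : Fin 2 → Polynomial ℝ) i ^ k)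
      = X ^ (v 0) * (X + 1) ^ (v 1) := by
    rw [Finsupp.prod_fintype]
    · rw [Fin.prod_univ_two]
      simp
    · intro i; exact pow_zero _
  rw [this, algebraMap_eq, mul_assoc]

theorem stmt9 (f : MvPolynomial (Fin 2) ℝ) (t : ℕ) (ht : f.support.card ≤ t)
    (hg : subXX1 f ≠ 0) :
    ((((subXX1 f).roots.filter fun x => 0 < x).card : ℤ)) ≤ 2 * t - 2 := by
  have hf0 : f ≠ 0 := by
    intro h
    rw [h] at hg
    exact hg (map_zero _)
  have ht1 : 1 ≤ t := by
    have h1 : f.support.Nonempty := by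
      rw [MvPolynomial.support_nonempty]
      exact hf0
    have := Finset.card_pos.2 h1
    omega
  set S : Finset (ℕ × ℕ) := f.support.image (fun v => (v 0, v 1)) with hS
  set c : ℕ × ℕ → ℝ := fun q => MvPolynomial.coeff (epair q) f with hc
  have hinj : Set.InjOn (fun v : Fin 2 →₀ ℕ => (v 0, v 1)) f.support := by
    intro x _ y _ hxy
    have := congrArg epair hxy
    rwa [epair_pair, epair_pair] at this
  have hsum : subXX1 f = ∑ q ∈ S, C (c q) * X ^ q.1 * (X + 1) ^ q.2 := by
    rw [hS, Finset.sum_image (fun x hx y hy => hinj hx hy), subXX1_eq_sum]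
    refine Finset.sum_congr rfl fun v _ => ?_
    rw [hc]
    dsimp only
    rw [epair_pair]
  have hcard : S.card ≤ t := le_trans (Finset.card_image_le) ht
  have hsv : signVar (subXX1 f) ≤ 2 * t - 2 := by
    rw [hsum]
    exact main_sv t S c hcard
  have hdes := descartes_aux (subXX1 f).natDegree (subXX1 f) hg le_rfl
  have hfin : Multiset.card ((subXX1 f).roots.filter fun x => 0 < x) ≤ 2 * t - 2 :=
    le_trans hdes hsv
  omega
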